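/- arXiv:1408.6731 — 7 statements merged into one kernel-verified Lean document; each statement's English description precedes it below -/
import Mathlib

section
/- For independent [0,1]-valued random variables X_1,...,X_n with max_i E[X_i] = x, one has E[max_i X_i] ≤ 1 - (1-x)^n. -/
open MeasureTheory ProbabilityTheory

lemma aux_prod_integral {Ω : Type*} [MeasurableSpace Ω] (μ : Measure Ω)
    [IsProbabilityMeasure μ] {ι : Type*} (Y : ι → Ω → ℝ)
    (hmeas : ∀ i, Measurable (Y i)) (hpos : ∀ i ω, 0 ≤ Y i ω)
    (hindep : iIndepFun Y μ) (s : Finset ι) :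
    ∫ ω, ∏ i ∈ s, Y i ω ∂μ = ∏ i ∈ s, ∫ ω, Y i ω ∂μ := by
  classical
  induction s using Finset.induction_on with
  | empty => simp
  | insert j s hi ih =>
    rw [Finset.prod_insert hi]
    simp_rw [Finset.prod_insert hi]
    have hind : IndepFun (∏ k ∈ s, Y k) (Y j) μ :=
      hindep.indepFun_finsetProd_of_notMem hmeas hi
    have hfun : (∏ k ∈ s, Y k) = fun a => ∏ k ∈ s, Y k a :=
      funext fun a => by simp [Finset.prod_apply]
    have hmul : ∫ ω, ((∏ k ∈ s, Y k) * Y j) ω ∂μ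
        = (∫ ω, (∏ k ∈ s, Y k) ω ∂μ) * ∫ ω, Y j ω ∂μ := by
      apply hind.integral_mul_eq_mul_integral
      · rw [hfun]
        exact (Finset.measurable_prod s (fun k _ => hmeas k)).aestronglyMeasurable
      · exact (hmeas j).aestronglyMeasurable
    have heq : ∀ ω, Y j ω * ∏ k ∈ s, Y k ω = ((∏ k ∈ s, Y k) * Y j) ω := by
      intro ω; simp [Finset.prod_apply, mul_comm]
    calc ∫ ω, Y j ω * ∏ k ∈ s, Y k ω ∂μ
        = ∫ ω, ((∏ k ∈ s, Y k) * Y j) ω ∂μ := by simp_rw [heq]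
      _ = (∫ ω, (∏ k ∈ s, Y k) ω ∂μ) * ∫ ω, Y j ω ∂μ := hmul
      _ = (∫ ω, ∏ k ∈ s, Y k ω ∂μ) * ∫ ω, Y j ω ∂μ := by simp [Finset.prod_apply]
      _ = (∫ ω, Y j ω ∂μ) * ∏ k ∈ s, ∫ ω, Y k ω ∂μ := by rw [ih]; ring

theorem stmt_0 {Ω : Type*} [MeasurableSpace Ω] (μ : Measure Ω) [IsProbabilityMeasure μ]
    (n : ℕ) (hn : 0 < n) (X : Fin n → Ω → ℝ)
    (hmeas : ∀ i, Measurable (X i))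
    (hrange : ∀ i ω, X i ω ∈ Set.Icc (0 : ℝ) 1)
    (hindep : iIndepFun X μ)
    (x : ℝ)
    (hx : IsGreatest {e : ℝ | ∃ i, e = ∫ ω, X i ω ∂μ} x) :
    ∫ ω, (⨆ i, X i ω) ∂μ ≤ 1 - (1 - x) ^ n := by
  have : NeZero n := ⟨hn.ne'⟩
  set Y : Fin n → Ω → ℝ := fun i ω => 1 - X i ω with hY
  have hYmeas : ∀ i, Measurable (Y i) := fun i => (measurable_const.sub (hmeas i))
  have hYpos : ∀ i ω, 0 ≤ Y i ω := fun i ω => by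
    have := (hrange i ω).2; simp [hY]; linarith
  have hYle : ∀ i ω, Y i ω ≤ 1 := fun i ω => by
    have := (hrange i ω).1; simp [hY]; linarith
  have hYindep : iIndepFun Y μ := by
    have : Y = fun i => (fun t : ℝ => 1 - t) ∘ X i := rfl
    rw [this]
    exact hindep.comp _ (fun i => measurable_const.sub measurable_id)
  -- product formula
  have hprod : ∫ ω, ∏ i, Y i ω ∂μ = ∏ i, ∫ ω, Y i ω ∂μ :=
    aux_prod_integral μ Y hYmeas hYpos hYindep Finset.univ
  -- each ∫ Y i = 1 - ∫ X i ≥ 1 - x ≥ 0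
  have hXi_le_x : ∀ i, ∫ ω, X i ω ∂μ ≤ x := fun i => hx.2 ⟨i, rfl⟩
  obtain ⟨i0, hi0⟩ := hx.1
  have hx0 : 0 ≤ x := hi0 ▸ integral_nonneg fun ω => (hrange i0 ω).1
  have hx1 : x ≤ 1 := by
    rw [hi0]
    calc ∫ ω, X i0 ω ∂μ ≤ ∫ _ω, (1 : ℝ) ∂μ := by
          apply integral_mono _ (integrable_const 1) (fun ω => (hrange i0 ω).2)
          exact (integrable_const 1).mono' (hmeas i0).aestronglyMeasurable
            (Filter.Eventually.of_forall fun ω => by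
              rw [Real.norm_eq_abs, abs_of_nonneg (hrange i0 ω).1]; exact (hrange i0 ω).2)
      _ = 1 := by simp
  have hXint : ∀ i, Integrable (X i) μ := fun i =>
    (integrable_const 1).mono' (hmeas i).aestronglyMeasurable
      (Filter.Eventually.of_forall fun ω => by
        rw [Real.norm_eq_abs, abs_of_nonneg (hrange i ω).1]; exact (hrange i ω).2)
  have hYint : ∀ i, ∫ ω, Y i ω ∂μ = 1 - ∫ ω, X i ω ∂μ := fun i => by
    rw [integral_sub (integrable_const 1) (hXint i)]; simp
  have hprod_ge : (1 - x) ^ n ≤ ∫ ω, ∏ i, Y i ω ∂μ := by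
    rw [hprod]
    calc (1 - x) ^ n = ∏ _i : Fin n, (1 - x) := by
          simp
      _ ≤ ∏ i, ∫ ω, Y i ω ∂μ := by
          apply Finset.prod_le_prod (fun i _ => by linarith)
          intro i _; rw [hYint i]; linarith [hXi_le_x i]
  -- pointwise: ∏ Y i ω ≤ 1 - ⨆ X i ω
  have hpoint : ∀ ω, ∏ i, Y i ω ≤ 1 - ⨆ i, X i ω := by
    intro ω
    obtain ⟨j, hj⟩ := Finite.exists_max (fun i => X i ω)
    have hsup : (⨆ i, X i ω) = X j ω :=
      le_antisymm (ciSup_le fun i => hj i) (le_ciSup (Set.Finite.bddAbove (Set.finite_range (fun i => X i ω))) j)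
    rw [hsup]
    calc ∏ i, Y i ω = Y j ω * ∏ i ∈ Finset.univ.erase j, Y i ω :=
          (Finset.mul_prod_erase _ _ (Finset.mem_univ j)).symm
      _ ≤ Y j ω * 1 := by
          apply mul_le_mul_of_nonneg_left _ (hYpos j ω)
          exact Finset.prod_le_one (fun i _ => hYpos i ω) (fun i _ => hYle i ω)
      _ = 1 - X j ω := by simp [hY]
  -- integrability of sup
  have hsupmeas : Measurable (fun ω => ⨆ i, X i ω) := Measurable.iSup hmeas
  have hsupint : Integrable (fun ω => ⨆ i, X i ω) μ := by
    apply (integrable_const 1).mono' hsupmeas.aestronglyMeasurable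
    apply Filter.Eventually.of_forall
    intro ω
    rw [Real.norm_eq_abs, abs_of_nonneg]
    · exact ciSup_le fun i => (hrange i ω).2
    · exact le_trans (hrange ⟨0, hn⟩ ω).1 (le_ciSup (Set.Finite.bddAbove (Set.finite_range (fun i => X i ω))) ⟨0, hn⟩)
  have hprodint : Integrable (fun ω => ∏ i, Y i ω) μ := by
    apply (integrable_const 1).mono'
      (Finset.measurable_prod Finset.univ (fun i _ => hYmeas i)).aestronglyMeasurable
    apply Filter.Eventually.of_forall
    intro ω
    rw [Real.norm_eq_abs, abs_of_nonneg (Finset.prod_nonneg fun i _ => hYpos i ω)]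
    exact Finset.prod_le_one (fun i _ => hYpos i ω) (fun i _ => hYle i ω)
  have hint_le : ∫ ω, ∏ i, Y i ω ∂μ ≤ ∫ ω, (1 - ⨆ i, X i ω) ∂μ :=
    integral_mono hprodint ((integrable_const 1).sub hsupint) hpoint
  rw [integral_sub (integrable_const 1) hsupint] at hint_le
  simp only [integral_const, measure_univ, probReal_univ, ENNReal.toReal_one, one_smul, smul_eq_mul] at hint_le
  linarith [hprod_ge]
end

section
/- For arbitrary [0,1]-valued random variables X_1,...,X_n, E[max_i X_i] - max_i E[X_i] ≤ 1 - 1/n, and equality is attained by the random vector Z uniformly distributed on the n canonical unit vectors e_1,...,e_n of {0,1}^n. -/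
open MeasureTheory
open scoped ENNReal NNReal

theorem stmt_3 (n : ℕ) (hn : 0 < n) :
    (∀ (Ω : Type) (_ : MeasurableSpace Ω) (μ : Measure Ω), IsProbabilityMeasure μ →
      ∀ (X : Fin n → Ω → ℝ), (∀ i, Measurable (X i)) →
        (∀ i ω, X i ω ∈ Set.Icc (0 : ℝ) 1) →
        ∀ x : ℝ, IsGreatest {e : ℝ | ∃ i, e = ∫ ω, X i ω ∂μ} x →
          (∫ ω, (⨆ i, X i ω) ∂μ) - x ≤ 1 - 1 / n) ∧
    (∃ (Ω : Type) (_ : MeasurableSpace Ω) (μ : Measure Ω) (_ : IsProbabilityMeasure μ)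
        (Z : Fin n → Ω → ℝ),
      (∀ i, Measurable (Z i)) ∧
      (∀ i ω, Z i ω = 0 ∨ Z i ω = 1) ∧
      (∀ ω, ∃! i, Z i ω = 1) ∧
      (∀ i, μ {ω | Z i ω = 1} = 1 / n) ∧
      (∀ i, ∫ ω, Z i ω ∂μ = 1 / n) ∧
      (∫ ω, (⨆ i, Z i ω) ∂μ) - 1 / n = 1 - 1 / n) := by
  have hn' : (0:ℝ) < n := Nat.cast_pos.mpr hn
  have hninv : (0:ℝ) < 1/n := by positivity
  have hninv1 : (1:ℝ)/n ≤ 1 := by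
    rw [div_le_one hn']; exact_mod_cast hn
  haveI : NeZero n := ⟨hn.ne'⟩
  constructor
  · intro Ω mΩ μ hμ X hmeas hbd x hx
    have hint : ∀ i, Integrable (X i) μ := by
      intro i
      refine (integrable_const (1:ℝ)).mono' (hmeas i).aestronglyMeasurable ?_
      filter_upwards with ω
      rw [Real.norm_eq_abs, abs_le]
      exact ⟨by linarith [(hbd i ω).1], (hbd i ω).2⟩
    have hsupmeas : Measurable (fun ω => ⨆ i, X i ω) := Measurable.iSup hmeas
    have hsupint : Integrable (fun ω => ⨆ i, X i ω) μ := by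
      refine (integrable_const (1:ℝ)).mono' hsupmeas.aestronglyMeasurable ?_
      filter_upwards with ω
      rw [Real.norm_eq_abs, abs_le]
      constructor
      · have := le_ciSup (f := fun i => X i ω) (Set.finite_range _).bddAbove ⟨0, hn⟩
        linarith [(hbd ⟨0, hn⟩ ω).1]
      · exact ciSup_le fun i => (hbd i ω).2
    -- pointwise bound
    have hpt : ∀ ω, (⨆ i, X i ω) ≤ (1 - 1/n) + (1/n) * ∑ i, X i ω := by
      intro ω
      have h1 : (⨆ i, X i ω) ≤ 1 := ciSup_le fun i => (hbd i ω).2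
      have h2 : (⨆ i, X i ω) ≤ ∑ i, X i ω := by
        refine ciSup_le fun i => ?_
        exact Finset.single_le_sum (fun j _ => (hbd j ω).1) (Finset.mem_univ i)
      nlinarith
    have hgint : Integrable (fun ω => (1 - 1/(n:ℝ)) + (1/n) * ∑ i, X i ω) μ := by
      exact (integrable_const _).add ((integrable_finset_sum _ (fun i _ => hint i)).const_mul _)
    have hI : (∫ ω, (⨆ i, X i ω) ∂μ) ≤ (1 - 1/n) + (1/n) * ∑ i, ∫ ω, X i ω ∂μ := by
      calc (∫ ω, (⨆ i, X i ω) ∂μ) ≤ ∫ ω, ((1 - 1/(n:ℝ)) + (1/n) * ∑ i, X i ω) ∂μ :=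
            integral_mono hsupint hgint hpt
        _ = (1 - 1/n) + (1/n) * ∑ i, ∫ ω, X i ω ∂μ := by
            rw [integral_add (integrable_const _)
              ((integrable_finset_sum _ (fun i _ => hint i)).const_mul _),
              integral_const, integral_const_mul, integral_finset_sum _ (fun i _ => hint i)]
            simp [measure_univ]
    have hsum : ∑ i, ∫ ω, X i ω ∂μ ≤ n * x := by
      calc ∑ i : Fin n, ∫ ω, X i ω ∂μ ≤ ∑ i : Fin n, x :=
            Finset.sum_le_sum fun i _ => hx.2 ⟨i, rfl⟩
        _ = n * x := by simp [mul_comm]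
    have : (1/(n:ℝ)) * (n * x) = x := by field_simp
    nlinarith
  · refine ⟨Fin n, inferInstance, ((n:ℝ≥0∞)⁻¹ • Measure.count), ?_,
      fun i ω => if ω = i then 1 else 0, ?_, ?_, ?_, ?_, ?_, ?_⟩
    · constructor
      rw [Measure.smul_apply, smul_eq_mul, Measure.count_apply_finite _ (Set.finite_univ)]
      simp only [Set.toFinite_toFinset, Set.toFinset_univ, Finset.card_univ, Fintype.card_fin]
      rw [ENNReal.inv_mul_cancel (by exact_mod_cast hn.ne') (by simp)]
    · intro i; exact Measurable.of_discrete
    · intro i ω; by_cases h : ω = i <;> simp [h]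
    · intro ω
      refine ⟨ω, by simp, fun j hj => ?_⟩
      by_contra h
      simp [Ne.symm h] at hj
    · intro i
      have : {ω : Fin n | (if ω = i then (1:ℝ) else 0) = 1} = {i} := by
        ext ω; by_cases h : ω = i <;> simp [h]
      rw [this, Measure.smul_apply, smul_eq_mul, Measure.count_singleton, mul_one, one_div]
    · intro i
      have : (fun ω : Fin n => if ω = i then (1:ℝ) else 0) = Set.indicator {i} (fun _ => 1) := by
        ext ω; by_cases h : ω = i <;> simp [h]
      rw [this, integral_indicator_const _ (measurableSet_singleton i)]
      rw [measureReal_def, Measure.smul_apply, smul_eq_mul, Measure.count_singleton, mul_one]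
      simp [ENNReal.toReal_inv]
    · have : (fun ω : Fin n => ⨆ i, if ω = i then (1:ℝ) else 0) = fun _ => 1 := by
        funext ω
        refine le_antisymm (ciSup_le fun i => by split <;> norm_num) ?_
        have := le_ciSup (f := fun i => if ω = i then (1:ℝ) else 0)
          (Set.finite_range _).bddAbove ω
        simpa using this
      rw [this]
      haveI : IsProbabilityMeasure ((n:ℝ≥0∞)⁻¹ • Measure.count : Measure (Fin n)) := by
        constructor
        rw [Measure.smul_apply, smul_eq_mul, Measure.count_apply_finite _ (Set.finite_univ)]
        simp only [Set.toFinite_toFinset, Set.toFinset_univ, Finset.card_univ, Fintype.card_fin]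
        rw [ENNReal.inv_mul_cancel (by exact_mod_cast hn.ne') (by simp)]
      simp
end

section
/- With R_I = {(x,y) : 0 ≤ x ≤ y ≤ 2x - x^2} ⊂ [0,1]^2, one has area(R_I) = 1/6, ∫_{R_I} (y-x) d(x,y) = 1/60 (so the mean difference under uniform measure on R_I is 1/10), and ∫_{R_I} (y/x) d(x,y) = 5/24 (so the mean ratio is 5/4). -/
open MeasureTheory Set

noncomputable def RI : Set (ℝ × ℝ) := {p | 0 ≤ p.1 ∧ p.1 ≤ p.2 ∧ p.2 ≤ 2 * p.1 - p.1 ^ 2}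

lemma RI_meas : MeasurableSet RI := by
  have : RI = {p : ℝ × ℝ | 0 ≤ p.1} ∩ ({p | p.1 ≤ p.2} ∩ {p | p.2 ≤ 2 * p.1 - p.1 ^ 2}) := by
    ext p; simp [RI, and_assoc]
  rw [this]
  exact (measurableSet_le measurable_const measurable_fst).inter
    ((measurableSet_le measurable_fst measurable_snd).inter
      (measurableSet_le measurable_snd (by fun_prop)))

lemma RI_section (x : ℝ) : Prod.mk x ⁻¹' RI = if 0 ≤ x then Icc x (2*x - x^2) else ∅ := by
  split_ifs with h
  · ext y; simp [RI, h, Icc]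
  · ext y; simp [RI, h]

lemma RI_vol : volume RI = ENNReal.ofReal (1/6) := by
  rw [Measure.volume_eq_prod, Measure.prod_apply RI_meas]
  have h1 : ∀ x : ℝ, volume (Prod.mk x ⁻¹' RI) = ENNReal.ofReal (x - x^2) := by
    intro x
    rw [RI_section]
    split_ifs with h
    · rw [Real.volume_Icc]; ring_nf
    · push_neg at h
      rw [measure_empty, Eq.comm, ENNReal.ofReal_eq_zero]
      nlinarith
  simp_rw [h1]
  have h2 : ∀ x : ℝ, ENNReal.ofReal (x - x^2) =
      (Icc (0:ℝ) 1).indicator (fun x => ENNReal.ofReal (x - x^2)) x := by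
    intro x
    rcases le_or_gt 0 x with h | h
    · rcases le_or_gt x 1 with h' | h'
      · rw [indicator_of_mem (by exact ⟨h, h'⟩)]
      · rw [indicator_of_notMem (by simp [h'.not_ge]), ENNReal.ofReal_eq_zero]
        nlinarith
    · rw [indicator_of_notMem (by simp [h.not_ge]), ENNReal.ofReal_eq_zero]
      nlinarith
  rw [lintegral_congr h2, lintegral_indicator measurableSet_Icc,
    ← ofReal_integral_eq_lintegral_ofReal]
  · rw [integral_Icc_eq_integral_Ioc, ← intervalIntegral.integral_of_le (by norm_num)]
    norm_num
  · apply Continuous.integrableOn_Icc; fun_prop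
  · filter_upwards [ae_restrict_mem measurableSet_Icc] with x hx
    simp only [Pi.zero_apply]
    nlinarith [hx.1, hx.2]

lemma RI_integral (f : ℝ × ℝ → ℝ) (hf : Measurable f) (C : ℝ)
    (hC : ∀ p ∈ RI, |f p| ≤ C) :
    ∫ p in RI, f p = ∫ x in Icc (0:ℝ) 1, ∫ y in Icc x (2*x - x^2), f (x, y) := by
  have hvol : volume RI ≠ ⊤ := by rw [RI_vol]; exact ENNReal.ofReal_ne_top
  have hint : IntegrableOn f RI := by
    apply Measure.integrableOn_of_bounded hvol hf.aestronglyMeasurable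
    filter_upwards [ae_restrict_mem RI_meas] with p hp
    simpa [Real.norm_eq_abs] using hC p hp
  rw [← integral_indicator RI_meas, Measure.volume_eq_prod, integral_prod]
  · have key : ∀ x : ℝ, (∫ y, RI.indicator f (x, y)) =
        (Icc (0:ℝ) 1).indicator (fun x => ∫ y in Icc x (2*x - x^2), f (x, y)) x := by
      intro x
      have hsec : ∀ y, RI.indicator f (x, y) =
          (Prod.mk x ⁻¹' RI).indicator (fun y => f (x, y)) y := by
        intro y; by_cases hy : (x, y) ∈ RI <;> simp [indicator, hy, Set.mem_preimage]
      simp_rw [hsec, RI_section]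
      split_ifs with h
      · rw [integral_indicator measurableSet_Icc]
        rcases le_or_gt x 1 with h1 | h1
        · rw [indicator_of_mem (Set.mem_Icc.2 ⟨h, h1⟩)]
        · rw [indicator_of_notMem (by simp [h1.not_ge])]
          rw [Icc_eq_empty (by nlinarith)]
          simp
      · rw [indicator_of_notMem (by simp [h])]
        simp
    rw [integral_congr_ae (Filter.EventuallyEq.of_eq (funext key)),
      integral_indicator measurableSet_Icc]
  · rwa [← Measure.volume_eq_prod, integrable_indicator_iff RI_meas]

lemma RI_int_diff : ∫ p in RI, (p.2 - p.1) = 1/60 := by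
  rw [RI_integral _ (by fun_prop) 1 (by
    rintro ⟨x, y⟩ ⟨h1, h2, h3⟩
    rw [abs_le]
    constructor <;> nlinarith)]
  have inner1 : EqOn (fun x : ℝ => ∫ y in Icc x (2*x - x^2), (y - x))
      (fun x : ℝ => x^2/2 - x^3 + x^4/2) (Icc 0 1) := by
    intro x hx
    simp only [Set.mem_Icc] at hx
    have hb : x ≤ 2*x - x^2 := by nlinarith [hx.1, hx.2]
    simp only
    rw [integral_Icc_eq_integral_Ioc, ← intervalIntegral.integral_of_le hb,
      intervalIntegral.integral_sub intervalIntegral.intervalIntegrable_id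
        intervalIntegrable_const]
    simp [integral_id, intervalIntegral.integral_const]
    ring
  rw [setIntegral_congr_fun measurableSet_Icc inner1,
    integral_Icc_eq_integral_Ioc, ← intervalIntegral.integral_of_le (by norm_num : (0:ℝ) ≤ 1)]
  rw [intervalIntegral.integral_add (Continuous.intervalIntegrable (by fun_prop) _ _) (Continuous.intervalIntegrable (by fun_prop) _ _),
    intervalIntegral.integral_sub (Continuous.intervalIntegrable (by fun_prop) _ _) (Continuous.intervalIntegrable (by fun_prop) _ _),
    intervalIntegral.integral_div, intervalIntegral.integral_div]
  norm_num

lemma RI_int_ratio : ∫ p in RI, p.2 / p.1 = 5/24 := by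
  rw [RI_integral _ (by fun_prop) 2 (by
    rintro ⟨x, y⟩ ⟨h1, h2, h3⟩
    simp only
    rcases eq_or_lt_of_le h1 with h0 | h0
    · have hy : y = 0 := le_antisymm (by nlinarith) (by nlinarith)
      simp [hy]
    · rw [abs_le]
      constructor
      · have : 0 ≤ y / x := div_nonneg (le_trans h1 h2) h0.le
        linarith
      · rw [div_le_iff₀ h0]
        nlinarith)]
  have inner2 : EqOn (fun x : ℝ => ∫ y in Icc x (2*x - x^2), y / x)
      (fun x : ℝ => x^3/2 - x^2*2 + x*(3/2)) (Icc 0 1) := by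
    intro x hx
    simp only [Set.mem_Icc] at hx
    simp only
    rcases eq_or_lt_of_le hx.1 with h0 | h0
    · rw [← h0]
      norm_num
    · have hb : x ≤ 2*x - x^2 := by nlinarith [hx.2]
      rw [integral_Icc_eq_integral_Ioc, ← intervalIntegral.integral_of_le hb]
      simp_rw [div_eq_mul_inv]
      rw [intervalIntegral.integral_mul_const, integral_id]
      field_simp
      ring
  rw [setIntegral_congr_fun measurableSet_Icc inner2,
    integral_Icc_eq_integral_Ioc, ← intervalIntegral.integral_of_le (by norm_num : (0:ℝ) ≤ 1)]
  rw [intervalIntegral.integral_add (Continuous.intervalIntegrable (by fun_prop) _ _) (Continuous.intervalIntegrable (by fun_prop) _ _),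
    intervalIntegral.integral_sub (Continuous.intervalIntegrable (by fun_prop) _ _) (Continuous.intervalIntegrable (by fun_prop) _ _),
    intervalIntegral.integral_div, intervalIntegral.integral_mul_const,
    intervalIntegral.integral_mul_const]
  norm_num

theorem stmt_13 :
    let R : Set (ℝ × ℝ) := {p | 0 ≤ p.1 ∧ p.1 ≤ p.2 ∧ p.2 ≤ 2 * p.1 - p.1 ^ 2}
    volume R = ENNReal.ofReal (1 / 6) ∧
    (∫ p in R, (p.2 - p.1) ∂volume) = 1 / 60 ∧
    (∫ p in R, (p.2 - p.1) ∂volume) / (volume R).toReal = 1 / 10 ∧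
    (∫ p in R, p.2 / p.1 ∂volume) = 5 / 24 ∧
    (∫ p in R, p.2 / p.1 ∂volume) / (volume R).toReal = 5 / 4 := by
  intro R
  have hR : R = RI := rfl
  rw [hR, RI_vol, RI_int_diff, RI_int_ratio, ENNReal.toReal_ofReal (by norm_num)]
  norm_num
end

section
/- Under the uniform distribution on R_I = {(x,y) : 0 ≤ x ≤ y ≤ 2x - x^2}, for every c ∈ [1,2] the probability that y/x ≥ c equals (2-c)^3. -/
open MeasureTheory

lemma aux_lintegral (b : ℝ) (hb0 : 0 ≤ b) :
    ∫⁻ x : ℝ, ENNReal.ofReal (b * x - x ^ 2) = ENNReal.ofReal (b ^ 3 / 6) := by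
  have hsupp : ∀ x : ℝ, x ∉ Set.Ioc (0:ℝ) b → ENNReal.ofReal (b * x - x ^ 2) = 0 := by
    intro x hx
    rw [Set.mem_Ioc, not_and_or] at hx
    apply ENNReal.ofReal_eq_zero.2
    rcases hx with hx | hx
    · push_neg at hx
      nlinarith
    · push_neg at hx
      nlinarith
  have hind : (fun x : ℝ => ENNReal.ofReal (b * x - x ^ 2)) =
      Set.indicator (Set.Ioc 0 b) (fun x => ENNReal.ofReal (b * x - x ^ 2)) := by
    ext x
    by_cases hx : x ∈ Set.Ioc (0:ℝ) b
    · rw [Set.indicator_of_mem hx]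
    · rw [Set.indicator_of_notMem hx, hsupp x hx]
  rw [hind, lintegral_indicator measurableSet_Ioc]
  have hint : IntegrableOn (fun x : ℝ => b * x - x ^ 2) (Set.Ioc 0 b) volume := by
    apply Continuous.integrableOn_Ioc
    continuity
  have hpos : 0 ≤ᵐ[volume.restrict (Set.Ioc 0 b)] fun x : ℝ => b * x - x ^ 2 := by
    filter_upwards [ae_restrict_mem measurableSet_Ioc] with x hx
    simp only [Pi.zero_apply]
    nlinarith [hx.1.le, hx.2]
  rw [← ofReal_integral_eq_lintegral_ofReal hint hpos]
  congr 1
  rw [← intervalIntegral.integral_of_le hb0]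
  have : ∫ x in (0:ℝ)..b, (b * x - x ^ 2) =
      (b * ∫ x in (0:ℝ)..b, x) - ∫ x in (0:ℝ)..b, x ^ 2 := by
    rw [← intervalIntegral.integral_const_mul, ← intervalIntegral.integral_sub]
    · exact (intervalIntegral.intervalIntegrable_id).const_mul b
    · exact intervalIntegral.intervalIntegrable_pow 2
  rw [this, integral_id, integral_pow]
  ring

theorem stmt_14 (c : ℝ) (hc : c ∈ Set.Icc (1 : ℝ) 2) :
    let R : Set (ℝ × ℝ) := {p | 0 ≤ p.1 ∧ p.1 ≤ p.2 ∧ p.2 ≤ 2 * p.1 - p.1 ^ 2}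
    volume (R ∩ {p : ℝ × ℝ | c * p.1 ≤ p.2}) / volume R = ENNReal.ofReal ((2 - c) ^ 3) := by
  intro R
  obtain ⟨hc1, hc2⟩ := hc
  have hRmeas : MeasurableSet R := by
    apply MeasurableSet.inter
    · exact measurableSet_le measurable_const measurable_fst
    apply MeasurableSet.inter
    · exact measurableSet_le measurable_fst measurable_snd
    · exact measurableSet_le measurable_snd (by fun_prop)
  have hCmeas : MeasurableSet {p : ℝ × ℝ | c * p.1 ≤ p.2} :=
    measurableSet_le (by fun_prop) measurable_snd
  -- volume R
  have hvolR : volume R = ENNReal.ofReal (1 / 6) := by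
    rw [MeasureTheory.Measure.volume_eq_prod, Measure.prod_apply hRmeas]
    have : ∀ x : ℝ, volume (Prod.mk x ⁻¹' R) = ENNReal.ofReal (1 * x - x ^ 2) := by
      intro x
      have hpre : Prod.mk x ⁻¹' R = {y : ℝ | 0 ≤ x ∧ x ≤ y ∧ y ≤ 2 * x - x ^ 2} := rfl
      rw [hpre]
      by_cases hx : 0 ≤ x
      · have : {y : ℝ | 0 ≤ x ∧ x ≤ y ∧ y ≤ 2 * x - x ^ 2} = Set.Icc x (2 * x - x ^ 2) := by
          ext y; simp [Set.mem_Icc, hx]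
        rw [this, Real.volume_Icc]
        congr 1; ring
      · have h1 : {y : ℝ | 0 ≤ x ∧ x ≤ y ∧ y ≤ 2 * x - x ^ 2} = ∅ := by
          ext y; simp [hx]
        push_neg at hx
        rw [h1, measure_empty, Eq.comm, ENNReal.ofReal_eq_zero]
        nlinarith
    simp_rw [this]
    rw [aux_lintegral 1 (by norm_num)]
    norm_num
  -- volume of intersection
  have hvolI : volume (R ∩ {p : ℝ × ℝ | c * p.1 ≤ p.2}) = ENNReal.ofReal ((2 - c) ^ 3 / 6) := by
    rw [MeasureTheory.Measure.volume_eq_prod, Measure.prod_apply (hRmeas.inter hCmeas)]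
    have : ∀ x : ℝ, volume (Prod.mk x ⁻¹' (R ∩ {p : ℝ × ℝ | c * p.1 ≤ p.2})) =
        ENNReal.ofReal ((2 - c) * x - x ^ 2) := by
      intro x
      have hpre : Prod.mk x ⁻¹' (R ∩ {p : ℝ × ℝ | c * p.1 ≤ p.2}) =
          {y : ℝ | (0 ≤ x ∧ x ≤ y ∧ y ≤ 2 * x - x ^ 2) ∧ c * x ≤ y} := rfl
      rw [hpre]
      by_cases hx : 0 ≤ x
      · have hcx : x ≤ c * x := by nlinarith
        have : {y : ℝ | (0 ≤ x ∧ x ≤ y ∧ y ≤ 2 * x - x ^ 2) ∧ c * x ≤ y} =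
            Set.Icc (c * x) (2 * x - x ^ 2) := by
          ext y
          simp only [Set.mem_setOf_eq, Set.mem_Icc]
          constructor
          · rintro ⟨⟨_, _, h3⟩, h4⟩; exact ⟨h4, h3⟩
          · rintro ⟨h4, h3⟩; exact ⟨⟨hx, le_trans hcx h4, h3⟩, h4⟩
        rw [this, Real.volume_Icc]
        congr 1; ring
      · have h1 : {y : ℝ | (0 ≤ x ∧ x ≤ y ∧ y ≤ 2 * x - x ^ 2) ∧ c * x ≤ y} = ∅ := by
          ext y; simp [hx]
        push_neg at hx
        rw [h1, measure_empty, Eq.comm, ENNReal.ofReal_eq_zero]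
        nlinarith
    simp_rw [this]
    exact aux_lintegral (2 - c) (by linarith)
  rw [hvolI, hvolR, ← ENNReal.ofReal_div_of_pos (by norm_num : (0:ℝ) < 1 / 6)]
  congr 1
  ring
end

section
/- Under the uniform distribution on R_I = {(x,y) : 0 ≤ x ≤ y ≤ 2x - x^2}, for every d ∈ [0, 1/4] the probability that y - x ≥ d equals (1-4d)^{3/2}. -/
open MeasureTheory Set

/-- The graph of a measurable function has measure zero in the plane. -/
lemma graph_volume_zero (f : ℝ → ℝ) (hf : Measurable f) :
    volume {p : ℝ × ℝ | p.2 = f p.1} = 0 := by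
  rw [Measure.volume_eq_prod, Measure.prod_apply (measurableSet_graph hf)]
  have : ∀ x : ℝ, (Prod.mk x ⁻¹' {p : ℝ × ℝ | p.2 = f p.1}) = {f x} := by
    intro x; ext y; simp [Set.mem_preimage]
  simp [this]

/-- Volume of a closed region between two functions. -/
lemma volume_cc (f g : ℝ → ℝ) (hf : Measurable f) (hg : Measurable g)
    {s : Set ℝ} (hs : MeasurableSet s)
    (f_int : IntegrableOn f s) (g_int : IntegrableOn g s)
    (hfg : ∀ x ∈ s, f x ≤ g x) :
    volume {p : ℝ × ℝ | p.1 ∈ s ∧ p.2 ∈ Icc (f p.1) (g p.1)} =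
      ENNReal.ofReal (∫ y in s, (g - f) y) := by
  have hsub : regionBetween f g s ⊆
      {p : ℝ × ℝ | p.1 ∈ s ∧ p.2 ∈ Icc (f p.1) (g p.1)} := by
    rintro ⟨x, y⟩ ⟨hx, hy⟩
    exact ⟨hx, le_of_lt hy.1, le_of_lt hy.2⟩
  have hdiff : {p : ℝ × ℝ | p.1 ∈ s ∧ p.2 ∈ Icc (f p.1) (g p.1)} \ regionBetween f g s
      ⊆ {p : ℝ × ℝ | p.2 = f p.1} ∪ {p : ℝ × ℝ | p.2 = g p.1} := by
    rintro ⟨x, y⟩ ⟨⟨hx, h1, h2⟩, hnot⟩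
    simp only [regionBetween, Set.mem_setOf_eq, Set.mem_Ioo, not_and, not_lt] at hnot
    rcases lt_or_eq_of_le h1 with h1' | h1'
    · right
      exact le_antisymm h2 (hnot hx h1')
    · left; exact h1'.symm
  have hnull : volume ({p : ℝ × ℝ | p.1 ∈ s ∧ p.2 ∈ Icc (f p.1) (g p.1)} \
      regionBetween f g s) = 0 :=
    measure_mono_null hdiff
      (measure_union_null (graph_volume_zero f hf) (graph_volume_zero g hg))
  have heq : volume {p : ℝ × ℝ | p.1 ∈ s ∧ p.2 ∈ Icc (f p.1) (g p.1)} =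
      volume (regionBetween f g s) := by
    refine le_antisymm ?_ (measure_mono hsub)
    calc volume {p : ℝ × ℝ | p.1 ∈ s ∧ p.2 ∈ Icc (f p.1) (g p.1)}
        ≤ volume (regionBetween f g s) +
          volume ({p : ℝ × ℝ | p.1 ∈ s ∧ p.2 ∈ Icc (f p.1) (g p.1)} \
            regionBetween f g s) := by
          refine (measure_mono ?_).trans (measure_union_le _ _)
          intro p hp
          by_cases h : p ∈ regionBetween f g s
          · exact Or.inl h
          · exact Or.inr ⟨hp, h⟩
      _ = volume (regionBetween f g s) := by rw [hnull, add_zero]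
  rw [heq, Measure.volume_eq_prod]
  exact volume_regionBetween_eq_integral f_int g_int hs hfg

set_option maxHeartbeats 1000000 in
theorem stmt_15 (d : ℝ) (hd : d ∈ Set.Icc (0 : ℝ) (1 / 4)) :
    let R : Set (ℝ × ℝ) := {p | 0 ≤ p.1 ∧ p.1 ≤ p.2 ∧ p.2 ≤ 2 * p.1 - p.1 ^ 2}
    volume (R ∩ {p : ℝ × ℝ | d ≤ p.2 - p.1}) / volume R =
      ENNReal.ofReal ((1 - 4 * d) ^ ((3 : ℝ) / 2)) := by
  intro R
  obtain ⟨hd0, hd4⟩ := hd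
  obtain ⟨t, ht_def⟩ : ∃ t : ℝ, t = Real.sqrt (1 - 4 * d) := ⟨_, rfl⟩
  have h14 : (0:ℝ) ≤ 1 - 4 * d := by linarith
  have ht0 : 0 ≤ t := ht_def ▸ Real.sqrt_nonneg _
  have ht2 : t ^ 2 = 1 - 4 * d := ht_def ▸ Real.sq_sqrt h14
  have ht1 : t ≤ 1 := by nlinarith
  obtain ⟨a, ha_def⟩ : ∃ a : ℝ, a = (1 - t) / 2 := ⟨_, rfl⟩
  obtain ⟨b, hb_def⟩ : ∃ b : ℝ, b = (1 + t) / 2 := ⟨_, rfl⟩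
  have hab : a ≤ b := by rw [ha_def, hb_def]; linarith
  -- Description of R
  have hR : R = {p : ℝ × ℝ | p.1 ∈ Icc (0:ℝ) 1 ∧
      p.2 ∈ Icc (p.1) (2 * p.1 - p.1 ^ 2)} := by
    ext ⟨x, y⟩
    simp only [R, Set.mem_setOf_eq, Set.mem_Icc]
    constructor
    · rintro ⟨h0, h1, h2⟩
      refine ⟨⟨h0, ?_⟩, h1, h2⟩
      nlinarith
    · rintro ⟨⟨h0, h1⟩, h2, h3⟩
      exact ⟨h0, h2, h3⟩
  -- Description of R ∩ event
  have hRe : R ∩ {p : ℝ × ℝ | d ≤ p.2 - p.1} =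
      {p : ℝ × ℝ | p.1 ∈ Icc a b ∧ p.2 ∈ Icc (p.1 + d) (2 * p.1 - p.1 ^ 2)} := by
    ext ⟨x, y⟩
    simp only [R, Set.mem_inter_iff, Set.mem_setOf_eq, Set.mem_Icc]
    constructor
    · rintro ⟨⟨h0, h1, h2⟩, h3⟩
      have hxd : x + d ≤ 2 * x - x ^ 2 := by linarith
      have hq : (x - a) * (x - b) ≤ 0 := by
        rw [ha_def, hb_def] at *; nlinarith
      constructor
      · constructor
        · nlinarith
        · nlinarith
      · exact ⟨by linarith, h2⟩
    · rintro ⟨⟨hxa, hxb⟩, h2, h3⟩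
      have hx0 : 0 ≤ x := by
        have : (0:ℝ) ≤ a := by rw [ha_def]; linarith
        linarith
      exact ⟨⟨hx0, by linarith, h3⟩, by linarith⟩
  -- volumes
  have cont1 : Continuous (fun x : ℝ => x) := continuous_id
  have cont2 : Continuous (fun x : ℝ => 2 * x - x ^ 2) := by fun_prop
  have cont3 : Continuous (fun x : ℝ => x + d) := by fun_prop
  have hvolR : volume R = ENNReal.ofReal (1 / 6) := by
    rw [hR, volume_cc _ _ cont1.measurable cont2.measurable measurableSet_Icc
      (cont1.integrableOn_Icc) (cont2.integrableOn_Icc)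
      (fun x hx => by rcases hx with ⟨h0, h1⟩; nlinarith)]
    congr 1
    simp only [Pi.sub_apply]
    rw [MeasureTheory.integral_Icc_eq_integral_Ioc,
      ← intervalIntegral.integral_of_le (by norm_num : (0:ℝ) ≤ 1)]
    have key := intervalIntegral.integral_eq_sub_of_hasDerivAt
      (f := fun x : ℝ => x ^ 2 / 2 - x ^ 3 / 3)
      (f' := fun y : ℝ => 2 * y - y ^ 2 - y) (a := 0) (b := 1)
      (fun x _ => by
        have h1 : HasDerivAt (fun x : ℝ => x ^ 2) (2 * x) x := by
          simpa using hasDerivAt_pow 2 x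
        have h2 : HasDerivAt (fun x : ℝ => x ^ 3) (3 * x ^ 2) x := by
          simpa using hasDerivAt_pow 3 x
        have := (h1.div_const 2).sub (h2.div_const 3)
        convert this using 1
        · rfl
        ring)
      (by apply Continuous.intervalIntegrable; fun_prop)
    rw [key]
    norm_num
  have hvolRe : volume (R ∩ {p : ℝ × ℝ | d ≤ p.2 - p.1})
      = ENNReal.ofReal (t ^ 3 / 6) := by
    rw [hRe, volume_cc _ _ cont3.measurable cont2.measurable measurableSet_Icc
      (cont3.integrableOn_Icc) (cont2.integrableOn_Icc)
      (fun x hx => by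
        rcases hx with ⟨hxa, hxb⟩
        have hq : (x - a) * (x - b) ≤ 0 :=
          mul_nonpos_of_nonneg_of_nonpos (by linarith) (by linarith)
        rw [ha_def, hb_def] at hq
        nlinarith)]
    congr 1
    simp only [Pi.sub_apply]
    rw [MeasureTheory.integral_Icc_eq_integral_Ioc,
      ← intervalIntegral.integral_of_le hab]
    have key := intervalIntegral.integral_eq_sub_of_hasDerivAt
      (f := fun x : ℝ => x ^ 2 / 2 - x ^ 3 / 3 - d * x)
      (f' := fun y : ℝ => 2 * y - y ^ 2 - (y + d)) (a := a) (b := b)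
      (fun x _ => by
        have h1 : HasDerivAt (fun x : ℝ => x ^ 2) (2 * x) x := by
          simpa using hasDerivAt_pow 2 x
        have h2 : HasDerivAt (fun x : ℝ => x ^ 3) (3 * x ^ 2) x := by
          simpa using hasDerivAt_pow 3 x
        have h3 : HasDerivAt (fun x : ℝ => d * x) d x := by
          simpa using (hasDerivAt_id x).const_mul d
        have := ((h1.div_const 2).sub (h2.div_const 3)).sub h3
        convert this using 1
        · rfl
        ring)
      (by apply Continuous.intervalIntegrable; fun_prop)
    rw [key]
    rw [ha_def, hb_def]
    linear_combination (-t / 4) * ht2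
  rw [hvolR, hvolRe]
  rw [← ENNReal.ofReal_div_of_pos (by norm_num : (0:ℝ) < 1/6)]
  congr 1
  have hrpow : (1 - 4 * d) ^ ((3:ℝ) / 2) = t ^ 3 := by
    rw [show (3:ℝ)/2 = (1/2) * 3 by norm_num, Real.rpow_mul h14, ← Real.sqrt_eq_rpow,
      ← ht_def]
    rw [show ((3:ℝ)) = ((3:ℕ):ℝ) by norm_num, Real.rpow_natCast]
  rw [hrpow]
  field_simp
end

section
/- Under the uniform distribution on R_G = {(x,y) : 0 < x ≤ y ≤ x - x ln x} ∪ {(0,0)}, for every c ≥ 1 the probability that y/x ≥ c equals e^{2(1-c)}. -/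
open MeasureTheory Real Set

lemma ftc_key (d a : ℝ) (ha : 0 < a) :
    ∫ x in (0:ℝ)..a, ((1 - d) * x - x * Real.log x)
      = ((1-d)*a^2/2 - (a*(a*Real.log a)/2 - a^2/4))
        - ((1-d)*0^2/2 - ((0:ℝ)*(0*Real.log 0)/2 - (0:ℝ)^2/4)) := by
  apply intervalIntegral.integral_eq_sub_of_hasDerivAt_of_le ha.le
  · apply Continuous.continuousOn
    exact ((continuous_const.mul (continuous_pow 2)).div_const 2).sub
      (((continuous_id.mul Real.continuous_mul_log).div_const 2).sub
        ((continuous_pow 2).div_const 4))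
  · intro x hx
    have hx0 : x ≠ 0 := hx.1.ne'
    have h1 : HasDerivAt (fun x : ℝ => x * Real.log x) (1 * Real.log x + x * x⁻¹) x :=
      (hasDerivAt_id x).mul (Real.hasDerivAt_log hx0)
    have h2 : HasDerivAt (fun x : ℝ => x * (x * Real.log x))
        (1 * (x * Real.log x) + x * (1 * Real.log x + x * x⁻¹)) x :=
      (hasDerivAt_id x).mul h1
    have h3 : HasDerivAt (fun x : ℝ => (1-d) * x^2 / 2 - (x * (x * Real.log x) / 2 - x^2/4))
        ((1-d) * (2 * x^1) / 2 - ((1 * (x * Real.log x) + x * (1 * Real.log x + x * x⁻¹)) / 2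
          - (2 * x^1)/4)) x := by
      exact (((hasDerivAt_pow 2 x).const_mul (1-d)).div_const 2).sub
        ((h2.div_const 2).sub ((hasDerivAt_pow 2 x).div_const 4))
    convert h3 using 1
    · rfl
    · rfl
    rw [mul_inv_cancel₀ hx0]
    ring
  · exact (((continuous_const.mul continuous_id).sub Real.continuous_mul_log).intervalIntegrable _ _)

lemma key_vol (d : ℝ) (hd : 1 ≤ d) :
    volume {p : ℝ × ℝ | 0 < p.1 ∧ d * p.1 ≤ p.2 ∧ p.2 ≤ p.1 - p.1 * Real.log p.1}
      = ENNReal.ofReal (Real.exp (2 * (1 - d)) / 4) := by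
  set a : ℝ := Real.exp (1 - d) with ha_def
  have ha : 0 < a := Real.exp_pos _
  have hloga : Real.log a = 1 - d := Real.log_exp _
  have hS : MeasurableSet {p : ℝ × ℝ | 0 < p.1 ∧ d * p.1 ≤ p.2 ∧ p.2 ≤ p.1 - p.1 * Real.log p.1} := by
    apply MeasurableSet.inter
    · exact measurableSet_lt measurable_const measurable_fst
    apply MeasurableSet.inter
    · exact measurableSet_le (measurable_fst.const_mul d) measurable_snd
    · exact measurableSet_le measurable_snd
        ((measurable_fst.sub (measurable_fst.mul (Real.measurable_log.comp measurable_fst))))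
  rw [Measure.volume_eq_prod, Measure.prod_apply hS]
  have hslice : ∀ x : ℝ, volume (Prod.mk x ⁻¹' {p : ℝ × ℝ | 0 < p.1 ∧ d * p.1 ≤ p.2 ∧ p.2 ≤ p.1 - p.1 * Real.log p.1})
      = (Set.Ioc 0 a).indicator (fun x => ENNReal.ofReal ((1 - d) * x - x * Real.log x)) x := by
    intro x
    rcases le_or_gt x 0 with hx | hx
    · have h1 : Prod.mk x ⁻¹' {p : ℝ × ℝ | 0 < p.1 ∧ d * p.1 ≤ p.2 ∧ p.2 ≤ p.1 - p.1 * Real.log p.1} = ∅ := by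
        ext y; simp only [Set.mem_preimage, Set.mem_setOf_eq, Set.mem_empty_iff_false, iff_false]
        intro h; exact absurd h.1 (not_lt.2 hx)
      rw [h1, Set.indicator_of_notMem (by simp [hx])]
      simp
    · have h1 : Prod.mk x ⁻¹' {p : ℝ × ℝ | 0 < p.1 ∧ d * p.1 ≤ p.2 ∧ p.2 ≤ p.1 - p.1 * Real.log p.1}
          = Set.Icc (d * x) (x - x * Real.log x) := by
        ext y; simp [Set.mem_Icc, hx, and_assoc]
      rw [h1, Real.volume_Icc]
      rcases le_or_gt x a with hxa | hxa
      · rw [Set.indicator_of_mem (Set.mem_Ioc.2 ⟨hx, hxa⟩)]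
        congr 1; ring
      · rw [Set.indicator_of_notMem (by simp [not_le.2 hxa])]
        rw [ENNReal.ofReal_eq_zero]
        have hlog : 1 - d ≤ Real.log x := by
          rw [← hloga]; exact Real.log_le_log ha hxa.le
        nlinarith [hx.le]
  rw [lintegral_congr hslice, lintegral_indicator measurableSet_Ioc _]
  have hcont : Continuous (fun x : ℝ => (1 - d) * x - x * Real.log x) :=
    (continuous_const.mul continuous_id).sub Real.continuous_mul_log
  have hnn : 0 ≤ᵐ[volume.restrict (Set.Ioc 0 a)] fun x : ℝ => (1 - d) * x - x * Real.log x := by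
    refine (ae_restrict_iff' measurableSet_Ioc).2 (ae_of_all _ fun x hx => ?_)
    simp only [Pi.zero_apply]
    have hlog : Real.log x ≤ 1 - d := by rw [← hloga]; exact Real.log_le_log hx.1 hx.2
    nlinarith [hx.1.le]
  rw [← ofReal_integral_eq_lintegral_ofReal (hcont.integrableOn_Ioc) hnn]
  congr 1
  rw [← intervalIntegral.integral_of_le ha.le, ftc_key d a ha, hloga]
  have h2 : a^2 = Real.exp (2 * (1 - d)) := by
    rw [ha_def, sq, ← Real.exp_add]; ring_nf
  nlinarith [h2]

theorem stmt_16 (c : ℝ) (hc : 1 ≤ c) :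
    let R : Set (ℝ × ℝ) :=
      {p | 0 < p.1 ∧ p.1 ≤ p.2 ∧ p.2 ≤ p.1 - p.1 * Real.log p.1} ∪ {((0 : ℝ), (0 : ℝ))}
    volume (R ∩ {p : ℝ × ℝ | c * p.1 ≤ p.2}) / volume R =
      ENNReal.ofReal (Real.exp (2 * (1 - c))) := by
  intro R
  have hzero : volume ({((0:ℝ),(0:ℝ))} : Set (ℝ × ℝ)) = 0 := by
    rw [Measure.volume_eq_prod, ← Set.singleton_prod_singleton, Measure.prod_prod]
    simp
  have hnum : R ∩ {p : ℝ × ℝ | c * p.1 ≤ p.2}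
      = {p : ℝ × ℝ | 0 < p.1 ∧ c * p.1 ≤ p.2 ∧ p.2 ≤ p.1 - p.1 * Real.log p.1}
        ∪ {((0:ℝ),(0:ℝ))} := by
    ext p
    simp only [R, Set.mem_inter_iff, Set.mem_union, Set.mem_setOf_eq, Set.mem_singleton_iff]
    constructor
    · rintro ⟨h1 | h1, h2⟩
      · exact Or.inl ⟨h1.1, h2, h1.2.2⟩
      · exact Or.inr h1
    · rintro (h | h)
      · have hx : p.1 ≤ c * p.1 := le_mul_of_one_le_left h.1.le hc
        exact ⟨Or.inl ⟨h.1, hx.trans h.2.1, h.2.2⟩, h.2.1⟩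
      · refine ⟨Or.inr h, ?_⟩
        rw [h]; simp
  have hden : volume R = ENNReal.ofReal (1 / 4) := by
    have : R = {p : ℝ × ℝ | 0 < p.1 ∧ (1:ℝ) * p.1 ≤ p.2 ∧ p.2 ≤ p.1 - p.1 * Real.log p.1}
        ∪ {((0:ℝ),(0:ℝ))} := by
      simp only [R, one_mul]
    rw [this, measure_congr (union_ae_eq_left_of_ae_eq_empty (ae_eq_empty.2 hzero)), key_vol 1 le_rfl]
    norm_num
  rw [hnum, measure_congr (union_ae_eq_left_of_ae_eq_empty (ae_eq_empty.2 hzero)), key_vol c hc, hden,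
    ← ENNReal.ofReal_div_of_pos (by norm_num : (0:ℝ) < 1/4)]
  congr 1
  field_simp
end

section
/- With R = {(x,y) : 0 < x ≤ y ≤ x - x ln x} ∪ {(0,0)}, one has ∫_R (y-x) d(x,y) = ∫_0^1 (x^2 (ln x)^2)/2 dx = 1/27, so the mean difference under the uniform measure on R (of area 1/4) is 4/27; moreover ∫_R (y/x) d(x,y) = 3/8, so the mean ratio is 3/2. -/
open MeasureTheory Real Set

noncomputable def Bc (x : ℝ) : ℝ := 4 * (Real.sqrt x * Real.log (Real.sqrt x))^2

lemma Bc_cont : Continuous Bc := by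
  unfold Bc; fun_prop

lemma Bc_eq {x : ℝ} (hx : 0 ≤ x) : Bc x = x * (Real.log x)^2 := by
  unfold Bc
  rw [Real.log_sqrt hx]
  rw [show (Real.sqrt x * (Real.log x / 2))^2 = (Real.sqrt x)^2 * (Real.log x)^2 / 4 by ring,
    Real.sq_sqrt hx]
  ring

lemma hd1 {x : ℝ} (hx : 0 < x) :
    HasDerivAt (fun x : ℝ => x^2/4 - x^2*Real.log x/2) (-(x * Real.log x)) x := by
  have hlog := Real.hasDerivAt_log hx.ne'
  have hx0 : x ≠ 0 := hx.ne'
  have h := ((hasDerivAt_pow 2 x).div_const 4).sub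
    (((hasDerivAt_pow 2 x).mul hlog).div_const 2)
  have e : (2:ℕ) * x ^ (2-1) / 4 - ((2:ℕ) * x ^ (2-1) * log x + x ^ 2 * x⁻¹) / 2
      = -(x * Real.log x) := by field_simp; ring
  rw [e] at h
  exact h

lemma hd2 {x : ℝ} (hx : 0 < x) :
    HasDerivAt (fun x : ℝ => x^3/6*(Real.log x)^2 - x^3*Real.log x/9 + x^3/27)
      (x^2 * (Real.log x)^2 / 2) x := by
  have hlog := Real.hasDerivAt_log hx.ne'
  have hx0 : x ≠ 0 := hx.ne'
  have h := ((((hasDerivAt_pow 3 x).mul (hlog.pow 2)).div_const 6).sub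
    (((hasDerivAt_pow 3 x).mul hlog).div_const 9)).add ((hasDerivAt_pow 3 x).div_const 27)
  have e : ((3:ℕ) * x ^ (3 - 1) * (log ^ 2) x + x ^ 3 * ((2:ℕ) * log x ^ (2 - 1) * x⁻¹)) / 6 -
        ((3:ℕ) * x ^ (3 - 1) * log x + x ^ 3 * x⁻¹) / 9 +
      (3:ℕ) * x ^ (3 - 1) / 27 = x^2*(log x)^2/2 := by simp only [Pi.pow_apply]; field_simp; ring
  rw [e] at h
  exact h.congr_of_eventuallyEq (Filter.Eventually.of_forall fun y => by
    simp only [Pi.add_apply, Pi.sub_apply, Pi.mul_apply, Pi.pow_apply]; ring)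

lemma hd4 {x : ℝ} (hx : 0 < x) :
    HasDerivAt (fun x : ℝ => x^2*(Real.log x)^2/4 - 3*x^2*Real.log x/4 + 3*x^2/8)
      (x * (Real.log x)^2 / 2 - x * Real.log x) x := by
  have hlog := Real.hasDerivAt_log hx.ne'
  have hx0 : x ≠ 0 := hx.ne'
  have h := ((((hasDerivAt_pow 2 x).mul (hlog.pow 2)).div_const 4).sub
    ((((hasDerivAt_pow 2 x).mul hlog).const_mul 3).div_const 4)).add
    (((hasDerivAt_pow 2 x).const_mul 3).div_const 8)
  have e : ((2:ℕ) * x ^ (2-1) * (log ^ 2) x + x ^ 2 * ((2:ℕ) * log x ^ (2-1) * x⁻¹)) / 4 -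
        3 * ((2:ℕ) * x ^ (2-1) * log x + x ^ 2 * x⁻¹) / 4 +
      3 * ((2:ℕ) * x ^ (2-1)) / 8 = x * (Real.log x)^2 / 2 - x * Real.log x := by
    simp only [Pi.pow_apply]; field_simp; ring
  rw [e] at h
  exact h.congr_of_eventuallyEq (Filter.Eventually.of_forall fun y => by
    simp only [Pi.add_apply, Pi.sub_apply, Pi.mul_apply, Pi.pow_apply]; ring)
lemma contOn_xlog2 : ContinuousOn (fun x : ℝ => x * (Real.log x)^2) (Set.Icc 0 1) :=
  Bc_cont.continuousOn.congr fun x hx => (Bc_eq hx.1).symm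

lemma int1 : ∫ x in (0:ℝ)..1, -(x * Real.log x) = 1/4 := by
  have hcont : ContinuousOn (fun x : ℝ => x^2/4 - x^2*Real.log x/2) (Set.Icc 0 1) := by
    have : (fun x : ℝ => x^2/4 - x^2*Real.log x/2)
        = fun x => x^2/4 - x*(x*Real.log x)/2 := funext fun x => by ring
    rw [this]; fun_prop
  rw [intervalIntegral.integral_eq_sub_of_hasDeriv_right_of_le zero_le_one hcont
    (fun x hx => (hd1 hx.1).hasDerivWithinAt)
    (Real.continuous_mul_log.neg.intervalIntegrable 0 1)]
  norm_num [Real.log_one, Real.log_zero]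

lemma int2 : ∫ x in (0:ℝ)..1, x^2 * (Real.log x)^2 / 2 = 1/27 := by
  have hcont : ContinuousOn (fun x : ℝ => x^3/6*(Real.log x)^2 - x^3*Real.log x/9 + x^3/27)
      (Set.Icc 0 1) := by
    have : (fun x : ℝ => x^3/6*(Real.log x)^2 - x^3*Real.log x/9 + x^3/27)
        = fun x => x*(x*Real.log x)^2/6 - x^2*(x*Real.log x)/9 + x^3/27 := funext fun x => by ring
    rw [this]; fun_prop
  have hint : IntervalIntegrable (fun x : ℝ => x^2 * (Real.log x)^2 / 2) MeasureTheory.volume 0 1 := by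
    have : (fun x : ℝ => x^2 * (Real.log x)^2 / 2) = fun x => (x*Real.log x)^2/2 :=
      funext fun x => by ring
    rw [this]
    exact ((Real.continuous_mul_log.pow 2).div_const 2).intervalIntegrable 0 1
  rw [intervalIntegral.integral_eq_sub_of_hasDeriv_right_of_le zero_le_one hcont
    (fun x hx => (hd2 hx.1).hasDerivWithinAt) hint]
  norm_num [Real.log_one, Real.log_zero]

lemma int4 : ∫ x in (0:ℝ)..1, (x * (Real.log x)^2 / 2 - x * Real.log x) = 3/8 := by
  have hcont : ContinuousOn (fun x : ℝ => x^2*(Real.log x)^2/4 - 3*x^2*Real.log x/4 + 3*x^2/8)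
      (Set.Icc 0 1) := by
    have : (fun x : ℝ => x^2*(Real.log x)^2/4 - 3*x^2*Real.log x/4 + 3*x^2/8)
        = fun x => (x*Real.log x)^2/4 - 3*(x*(x*Real.log x))/4 + 3*x^2/8 := funext fun x => by ring
    rw [this]; fun_prop
  have hint : IntervalIntegrable (fun x : ℝ => x * (Real.log x)^2 / 2 - x * Real.log x)
      MeasureTheory.volume 0 1 := by
    apply ContinuousOn.intervalIntegrable
    rw [Set.uIcc_of_le zero_le_one]
    exact (contOn_xlog2.div_const 2).sub Real.continuous_mul_log.continuousOn
  rw [intervalIntegral.integral_eq_sub_of_hasDeriv_right_of_le zero_le_one hcont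
    (fun x hx => (hd4 hx.1).hasDerivWithinAt) hint]
  norm_num [Real.log_one, Real.log_zero]
noncomputable def gfun (x : ℝ) : ℝ := x - x * Real.log x

lemma gfun_cont : Continuous gfun := by
  unfold gfun; fun_prop

lemma gfun_meas : Measurable gfun := gfun_cont.measurable

def Rset : Set (ℝ × ℝ) :=
  {p | 0 < p.1 ∧ p.1 ≤ p.2 ∧ p.2 ≤ p.1 - p.1 * Real.log p.1} ∪ {((0 : ℝ), (0 : ℝ))}

noncomputable def Sset : Set (ℝ × ℝ) := regionBetween id gfun (Set.Ioo 0 1)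

lemma graph_null (f : ℝ → ℝ) (hf : Measurable f) :
    (volume.prod volume) {p : ℝ × ℝ | p.2 = f p.1} = 0 := by
  have hm : MeasurableSet {p : ℝ × ℝ | p.2 = f p.1} :=
    measurableSet_eq_fun measurable_snd (hf.comp measurable_fst)
  rw [Measure.prod_apply hm]
  have : ∀ x : ℝ, (volume : Measure ℝ) (Prod.mk x ⁻¹' {p : ℝ × ℝ | p.2 = f p.1}) = 0 := by
    intro x
    have : Prod.mk x ⁻¹' {p : ℝ × ℝ | p.2 = f p.1} = {f x} := by
      ext y; simp [Set.mem_preimage, Set.mem_singleton_iff]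
    rw [this, measure_singleton]
  simp [this]

lemma Sm : MeasurableSet Sset :=
  measurableSet_regionBetween measurable_id gfun_meas measurableSet_Ioo

lemma S_sub_R : Sset ⊆ Rset := by
  rintro ⟨x, y⟩ ⟨hx, hy⟩
  exact Or.inl ⟨hx.1, hy.1.le, hy.2.le⟩

lemma R_ae_S : Rset =ᵐ[volume] Sset := by
  rw [MeasureTheory.ae_eq_set]
  constructor
  · have hsub : Rset \ Sset ⊆ ({(1:ℝ)} ×ˢ (Set.univ : Set ℝ)) ∪
        ({p : ℝ × ℝ | p.2 = p.1} ∪ {p : ℝ × ℝ | p.2 = gfun p.1}) := by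
      rintro ⟨x, y⟩ ⟨hp, hns⟩
      rcases hp with ⟨hx, hxy, hyg⟩ | hp
      swap
      · simp only [Set.mem_singleton_iff, Prod.mk.injEq] at hp
        exact Or.inr (Or.inl (by simp [hp.1, hp.2]))
      · simp only [Set.mem_union, Set.mem_prod, Set.mem_singleton_iff, Set.mem_univ,
          and_true, Set.mem_setOf_eq]
        by_cases h1 : y = x
        · exact Or.inr (Or.inl h1)
        by_cases h2 : y = gfun x
        · exact Or.inr (Or.inr h2)
        · -- then x < y < gfun x, so x < 1, contradiction with hns
          have hxy' : x < y := lt_of_le_of_ne hxy (Ne.symm h1)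
          have hyg' : y < gfun x := lt_of_le_of_ne hyg h2
          have hx1 : x < 1 := by
            have hgl : x < gfun x := hxy'.trans hyg'
            unfold gfun at hgl
            have hlog : Real.log x < 0 := by nlinarith
            exact (Real.log_neg_iff hx).mp hlog
          exact absurd ⟨⟨hx, hx1⟩, hxy', hyg'⟩ hns
    refine measure_mono_null hsub ?_
    rw [Measure.volume_eq_prod]
    apply measure_union_null
    · rw [Measure.prod_prod]
      simp
    · exact measure_union_null (graph_null _ measurable_id) (graph_null _ gfun_meas)
  · rw [Set.diff_eq_empty.mpr S_sub_R]
    exact measure_empty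

lemma le_gfun {x : ℝ} (hx : x ∈ Set.Ioo (0:ℝ) 1) : x ≤ gfun x := by
  have := Real.log_neg hx.1 hx.2
  unfold gfun; nlinarith [hx.1]

lemma vol_S : volume Sset = ENNReal.ofReal (1/4) := by
  rw [Measure.volume_eq_prod]
  unfold Sset
  rw [volume_regionBetween_eq_integral
    (continuous_id.integrableOn_Icc.mono_set Set.Ioo_subset_Icc_self)
    (gfun_cont.integrableOn_Icc.mono_set Set.Ioo_subset_Icc_self)
    measurableSet_Ioo (fun x hx => le_gfun hx)]
  congr 1
  rw [show ((gfun - id) : ℝ → ℝ) = fun x => -(x * Real.log x) from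
    funext fun x => by simp only [Pi.sub_apply, id_eq, gfun]; ring]
  rw [← MeasureTheory.integral_Ioc_eq_integral_Ioo,
    ← intervalIntegral.integral_of_le zero_le_one, int1]

lemma vol_R : volume Rset = ENNReal.ofReal (1/4) := by
  rw [measure_congr R_ae_S, vol_S]
lemma mem_Sset {x y : ℝ} : (x, y) ∈ Sset ↔ x ∈ Set.Ioo (0:ℝ) 1 ∧ y ∈ Set.Ioo x (gfun x) := by
  unfold Sset regionBetween
  simp [Set.mem_setOf_eq]

lemma fubini_S (F : ℝ × ℝ → ℝ) (hF : Integrable (Sset.indicator F) (volume.prod volume)) :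
    ∫ p in Sset, F p ∂(volume : Measure (ℝ × ℝ)) =
      ∫ x in Set.Ioo (0:ℝ) 1, ∫ y in Set.Ioo x (gfun x), F (x, y) := by
  rw [Measure.volume_eq_prod, ← integral_indicator Sm]
  rw [MeasureTheory.integral_prod _ hF]
  have key : ∀ x : ℝ, (∫ y, Sset.indicator F (x, y)) =
      (Set.Ioo (0:ℝ) 1).indicator (fun x => ∫ y in Set.Ioo x (gfun x), F (x, y)) x := by
    intro x
    by_cases hx : x ∈ Set.Ioo (0:ℝ) 1
    · rw [Set.indicator_of_mem hx]
      have he : (fun y => Sset.indicator F (x, y))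
          = (Set.Ioo x (gfun x)).indicator (fun y => F (x, y)) := by
        funext y
        by_cases hy : y ∈ Set.Ioo x (gfun x)
        · rw [Set.indicator_of_mem hy, Set.indicator_of_mem (mem_Sset.mpr ⟨hx, hy⟩)]
        · rw [Set.indicator_of_notMem hy, Set.indicator_of_notMem
            (fun hmem => hy (mem_Sset.mp hmem).2)]
      rw [he, integral_indicator measurableSet_Ioo]
    · rw [Set.indicator_of_notMem hx]
      have he : (fun y => Sset.indicator F (x, y)) = fun _ => (0:ℝ) := by
        funext y
        exact Set.indicator_of_notMem (fun hmem => hx (mem_Sset.mp hmem).1) _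
      rw [he, integral_zero]
  simp_rw [key]
  rw [integral_indicator measurableSet_Ioo]
lemma neg_xlog_le {x : ℝ} (hx : 0 < x) : -(x * Real.log x) ≤ 1 - x := by
  have h1 : Real.log x⁻¹ ≤ x⁻¹ - 1 := Real.log_le_sub_one_of_pos (inv_pos.mpr hx)
  rw [Real.log_inv] at h1
  have h2 : x * x⁻¹ = 1 := mul_inv_cancel₀ hx.ne'
  nlinarith

lemma inner1 {x : ℝ} (hx : x ∈ Set.Ioo (0:ℝ) 1) :
    ∫ y in Set.Ioo x (gfun x), (y - x) = (x * Real.log x)^2 / 2 := by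
  rw [← MeasureTheory.integral_Ioc_eq_integral_Ioo,
    ← intervalIntegral.integral_of_le (le_gfun hx)]
  have hftc : ∀ y ∈ Set.uIcc x (gfun x), HasDerivAt (fun y : ℝ => (y - x)^2/2) (y - x) y := by
    intro y _
    have h := (((hasDerivAt_id y).sub_const x).pow 2).div_const 2
    simp only [id_eq] at h
    have e : ((2:ℕ) * (y - x) ^ (2-1) * 1) / 2 = y - x := by push_cast; ring
    rwa [e] at h
  rw [intervalIntegral.integral_eq_sub_of_hasDerivAt hftc
    ((continuous_id.sub continuous_const).intervalIntegrable _ _)]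
  have : gfun x - x = -(x * Real.log x) := by unfold gfun; ring
  rw [this]
  ring

lemma inner2 {x : ℝ} (hx : x ∈ Set.Ioo (0:ℝ) 1) :
    ∫ y in Set.Ioo x (gfun x), y / x = x * (Real.log x)^2 / 2 - x * Real.log x := by
  have hx0 : x ≠ 0 := hx.1.ne'
  rw [← MeasureTheory.integral_Ioc_eq_integral_Ioo,
    ← intervalIntegral.integral_of_le (le_gfun hx)]
  have hftc : ∀ y ∈ Set.uIcc x (gfun x), HasDerivAt (fun y : ℝ => y^2/(2*x)) (y / x) y := by
    intro y _
    have h := (hasDerivAt_pow 2 y).div_const (2*x)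
    have e : ((2:ℕ) * y ^ (2-1)) / (2*x) = y / x := by
      push_cast; field_simp
    rwa [e] at h
  rw [intervalIntegral.integral_eq_sub_of_hasDerivAt hftc
    ((continuous_id.div_const x).intervalIntegrable _ _)]
  unfold gfun
  field_simp
  ring

lemma intdiff : ∫ p in Rset, (p.2 - p.1) ∂(volume : Measure (ℝ × ℝ)) = 1/27 := by
  rw [setIntegral_congr_set R_ae_S]
  have hint : IntegrableOn (fun p : ℝ × ℝ => p.2 - p.1) Sset volume := by
    apply Measure.integrableOn_of_bounded (M := 1)
    · rw [vol_S]; exact ENNReal.ofReal_ne_top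
    · exact (measurable_snd.sub measurable_fst).aestronglyMeasurable
    · rw [MeasureTheory.ae_restrict_iff' Sm]
      refine Filter.Eventually.of_forall fun p hp => ?_
      obtain ⟨hx, hy⟩ := mem_Sset.mp (show (p.1, p.2) ∈ Sset from hp)
      rw [Real.norm_eq_abs, abs_le]
      constructor
      · nlinarith [hy.1.le]
      · have h1 : p.2 - p.1 ≤ gfun p.1 - p.1 := by nlinarith [hy.2.le]
        have h2 : gfun p.1 - p.1 = -(p.1 * Real.log p.1) := by unfold gfun; ring
        nlinarith [neg_xlog_le hx.1, hx.1]
  have hF : Integrable (Sset.indicator (fun p : ℝ × ℝ => p.2 - p.1)) (volume.prod volume) := by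
    rw [← Measure.volume_eq_prod]
    exact (integrable_indicator_iff Sm).mpr hint
  rw [fubini_S _ hF]
  rw [MeasureTheory.setIntegral_congr_fun measurableSet_Ioo
    (fun x hx => inner1 hx)]
  rw [← MeasureTheory.integral_Ioc_eq_integral_Ioo,
    ← intervalIntegral.integral_of_le zero_le_one]
  rw [show (fun x : ℝ => (x * Real.log x)^2/2) = fun x : ℝ => x^2 * (Real.log x)^2 / 2 from
    funext fun x => by ring]
  exact int2

lemma intratio : ∫ p in Rset, p.2 / p.1 ∂(volume : Measure (ℝ × ℝ)) = 3/8 := by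
  rw [setIntegral_congr_set R_ae_S]
  have hmeas : AEStronglyMeasurable (Sset.indicator (fun p : ℝ × ℝ => p.2 / p.1))
      (volume.prod volume) := by
    rw [← Measure.volume_eq_prod]
    exact ((measurable_snd.div measurable_fst).indicator Sm).aestronglyMeasurable
  have hsec : ∀ (x y : ℝ), Sset.indicator (fun p : ℝ × ℝ => p.2 / p.1) (x, y)
      = if x ∈ Set.Ioo (0:ℝ) 1 then (Set.Ioo x (gfun x)).indicator (fun y => y / x) y
        else 0 := by
    intro x y
    by_cases hx : x ∈ Set.Ioo (0:ℝ) 1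
    · rw [if_pos hx]
      by_cases hy : y ∈ Set.Ioo x (gfun x)
      · rw [Set.indicator_of_mem hy, Set.indicator_of_mem (mem_Sset.mpr ⟨hx, hy⟩)]
      · rw [Set.indicator_of_notMem hy,
          Set.indicator_of_notMem (fun hmem => hy (mem_Sset.mp hmem).2)]
    · rw [if_neg hx]
      exact Set.indicator_of_notMem (fun hmem => hx (mem_Sset.mp hmem).1) _
  have hF : Integrable (Sset.indicator (fun p : ℝ × ℝ => p.2 / p.1)) (volume.prod volume) := by
    rw [integrable_prod_iff hmeas]
    constructor
    · refine Filter.Eventually.of_forall fun x => ?_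
      simp only [hsec]
      split_ifs with hx
      · exact (integrable_indicator_iff measurableSet_Ioo).mpr
          (((continuous_id.div_const x).integrableOn_Icc).mono_set Set.Ioo_subset_Icc_self)
      · exact integrable_zero _ _ _
    · have hval : (fun x : ℝ => ∫ y, ‖Sset.indicator (fun p : ℝ × ℝ => p.2 / p.1) (x, y)‖)
          = (Set.Ioo (0:ℝ) 1).indicator (fun x => Bc x / 2 - x * Real.log x) := by
        funext x
        simp only [hsec]
        by_cases hx : x ∈ Set.Ioo (0:ℝ) 1
        · simp only [if_pos hx]
          rw [Set.indicator_of_mem hx]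
          have habs : ∀ y ∈ Set.Ioo x (gfun x), ‖y / x‖ = y / x := by
            intro y hy
            rw [Real.norm_eq_abs, abs_of_nonneg]
            exact div_nonneg (le_of_lt (hx.1.trans hy.1)) hx.1.le
          calc ∫ y, ‖(Set.Ioo x (gfun x)).indicator (fun y => y / x) y‖
              = ∫ y, (Set.Ioo x (gfun x)).indicator (fun y => y / x) y := by
                congr 1; funext y
                by_cases hy : y ∈ Set.Ioo x (gfun x)
                · rw [Set.indicator_of_mem hy]; exact habs y hy
                · rw [Set.indicator_of_notMem hy]; exact norm_zero
            _ = ∫ y in Set.Ioo x (gfun x), y / x := integral_indicator measurableSet_Ioo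
            _ = x * (Real.log x)^2 / 2 - x * Real.log x := inner2 hx
            _ = Bc x / 2 - x * Real.log x := by rw [Bc_eq hx.1.le]
        · simp only [if_neg hx]
          rw [Set.indicator_of_notMem hx]
          simp
      rw [hval]
      exact (integrable_indicator_iff measurableSet_Ioo).mpr
        ((((Bc_cont.div_const 2).sub Real.continuous_mul_log).integrableOn_Icc).mono_set
          Set.Ioo_subset_Icc_self)
  rw [fubini_S _ hF]
  rw [MeasureTheory.setIntegral_congr_fun measurableSet_Ioo (fun x hx => inner2 hx)]
  rw [← MeasureTheory.integral_Ioc_eq_integral_Ioo,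
    ← intervalIntegral.integral_of_le zero_le_one]
  exact int4

theorem stmt_17 :
    let R : Set (ℝ × ℝ) :=
      {p | 0 < p.1 ∧ p.1 ≤ p.2 ∧ p.2 ≤ p.1 - p.1 * Real.log p.1} ∪ {((0 : ℝ), (0 : ℝ))}
    volume R = ENNReal.ofReal (1 / 4) ∧
    (∫ x in (0 : ℝ)..1, x ^ 2 * (Real.log x) ^ 2 / 2) = 1 / 27 ∧
    (∫ p in R, (p.2 - p.1) ∂volume) = 1 / 27 ∧
    (∫ p in R, (p.2 - p.1) ∂volume) / (volume R).toReal = 4 / 27 ∧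
    (∫ p in R, p.2 / p.1 ∂volume) = 3 / 8 ∧
    (∫ p in R, p.2 / p.1 ∂volume) / (volume R).toReal = 3 / 2 := by
  intro R
  have hR : R = Rset := rfl
  rw [hR]
  have htoReal : (volume Rset).toReal = 1/4 := by
    rw [vol_R, ENNReal.toReal_ofReal (by norm_num)]
  refine ⟨vol_R, int2, intdiff, ?_, intratio, ?_⟩
  · rw [intdiff, htoReal]; norm_num
  · rw [intratio, htoReal]; norm_num
end
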